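/- Let k ≥ 2 be an integer and let Q = [a,b,c] be a positive definite integral binary quadratic form of discriminant −D (D > 0, a > 0, b² − 4ac = −D), with CM-point τ_Q := (−b + i√D)/(2a) and v_Q := √D/(2a). Let O(Q) ⊆ ℤ³ be the SL₂(ℤ)-orbit of Q under (Q∘M)(x,y) := Q(αx+βy, γx+δy), and set ω := (1/2)·#{M ∈ SL₂(ℤ) : M·τ_Q = τ_Q}. Then for every z in the upper half-plane not lying in the SL₂(ℤ)-orbit of τ_Q, D^{k/2} · ∑_{𝒬 ∈ O(Q)} 𝒬(z,1)^{−k} = ((2 v_Q)^k / (2ω)) · ∑_{M = [[α,β],[γ,δ]] ∈ SL₂(ℤ)} (γz+δ)^{−2k} · (M·z − conj(τ_Q))^{−2k} · X_{τ_Q}(M·z)^{−k}, both series converging absolutely (as tsums over O(Q) and over SL₂(ℤ) respectively). Here 𝒬(z,1) := a'z² + b'z + c' for 𝒬 = [a',b',c'], M·z = (αz+β)/(γz+δ), and X_ϱ(w) := (w − ϱ)/(w − conj(ϱ)). -/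

import Mathlib

/-- The Möbius action of `M = [[α,β],[γ,δ]] ∈ SL₂(ℤ)` on a complex number `z`,
`M·z = (αz+β)/(γz+δ)`. -/
noncomputable def moebius (g : Matrix.SpecialLinearGroup (Fin 2) ℤ) (z : ℂ) : ℂ :=
  (((g.1 0 0 : ℤ) : ℂ) * z + ((g.1 0 1 : ℤ) : ℂ)) / (((g.1 1 0 : ℤ) : ℂ) * z + ((g.1 1 1 : ℤ) : ℂ))

/-- The automorphy factor `γz + δ` for `M = [[α,β],[γ,δ]] ∈ SL₂(ℤ)`. -/
noncomputable def denomSL (g : Matrix.SpecialLinearGroup (Fin 2) ℤ) (z : ℂ) : ℂ :=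
  ((g.1 1 0 : ℤ) : ℂ) * z + ((g.1 1 1 : ℤ) : ℂ)

/-- The action of `M = [[α,β],[γ,δ]] ∈ SL₂(ℤ)` on (coefficient triples of) integral binary
quadratic forms, `(Q∘M)(x,y) = Q(αx+βy, γx+δy)`. -/
def formAct (q : ℤ × ℤ × ℤ) (g : Matrix.SpecialLinearGroup (Fin 2) ℤ) : ℤ × ℤ × ℤ :=
  (q.1 * (g.1 0 0) ^ 2 + q.2.1 * (g.1 0 0) * (g.1 1 0) + q.2.2 * (g.1 1 0) ^ 2,
   2 * q.1 * (g.1 0 0) * (g.1 0 1) + q.2.1 * ((g.1 0 0) * (g.1 1 1) + (g.1 0 1) * (g.1 1 0))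
     + 2 * q.2.2 * (g.1 1 0) * (g.1 1 1),
   q.1 * (g.1 0 1) ^ 2 + q.2.1 * (g.1 0 1) * (g.1 1 1) + q.2.2 * (g.1 1 1) ^ 2)

namespace Stmt17

local notation "SL2Z" => Matrix.SpecialLinearGroup (Fin 2) ℤ

lemma det_entries (g : SL2Z) : g.1 0 0 * g.1 1 1 - g.1 0 1 * g.1 1 0 = 1 := by
  have h := g.2
  rwa [Matrix.det_fin_two] at h

lemma mul_entry (g h : SL2Z) (i j : Fin 2) :
    (g * h).1 i j = g.1 i 0 * h.1 0 j + g.1 i 1 * h.1 1 j := by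
  rw [Matrix.SpecialLinearGroup.coe_mul, Matrix.mul_apply, Fin.sum_univ_two]

lemma formAct_mul (q : ℤ × ℤ × ℤ) (g h : SL2Z) :
    formAct q (g * h) = formAct (formAct q g) h := by
  have e := mul_entry g h
  simp only [formAct, e, Prod.mk.injEq]
  refine ⟨by ring, by ring, by ring⟩

lemma formAct_one (q : ℤ × ℤ × ℤ) : formAct q 1 = q := by
  simp only [formAct, Matrix.SpecialLinearGroup.coe_one, Matrix.one_apply_eq,
    Matrix.one_apply_ne (by decide : (0 : Fin 2) ≠ 1),
    Matrix.one_apply_ne (by decide : (1 : Fin 2) ≠ 0)]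
  simp

def Tmat (n : ℤ) : SL2Z :=
  ⟨!![1, n; 0, 1], by simp [Matrix.det_fin_two_of]⟩

@[simp] lemma Tmat00 (n : ℤ) : (Tmat n).1 0 0 = 1 := rfl
@[simp] lemma Tmat01 (n : ℤ) : (Tmat n).1 0 1 = n := rfl
@[simp] lemma Tmat10 (n : ℤ) : (Tmat n).1 1 0 = 0 := rfl
@[simp] lemma Tmat11 (n : ℤ) : (Tmat n).1 1 1 = 1 := rfl

lemma Tmat_mul_entries (n : ℤ) (g : SL2Z) :
    (Tmat n * g).1 0 0 = g.1 0 0 + n * g.1 1 0 ∧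
    (Tmat n * g).1 0 1 = g.1 0 1 + n * g.1 1 1 ∧
    (Tmat n * g).1 1 0 = g.1 1 0 ∧ (Tmat n * g).1 1 1 = g.1 1 1 := by
  refine ⟨?_, ?_, ?_, ?_⟩ <;> · rw [mul_entry]; simp

lemma eq_Tmat_mul_of_row_eq (g g' : SL2Z) (h0 : g.1 1 0 = g'.1 1 0) (h1 : g.1 1 1 = g'.1 1 1) :
    g = Tmat (g.1 0 1 * g'.1 0 0 - g.1 0 0 * g'.1 0 1) * g' := by
  have dg := det_entries g
  rw [h0, h1] at dg
  have dg' := det_entries g'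
  apply Subtype.ext
  ext i j
  fin_cases i <;> fin_cases j
  · show g.1 0 0 = (Tmat _ * g').1 0 0
    rw [(Tmat_mul_entries _ g').1]
    linear_combination g'.1 0 0 * dg - g.1 0 0 * dg'
  · show g.1 0 1 = (Tmat _ * g').1 0 1
    rw [(Tmat_mul_entries _ g').2.1]
    linear_combination g'.1 0 1 * dg - g.1 0 1 * dg'
  · show g.1 1 0 = (Tmat _ * g').1 1 0
    rw [(Tmat_mul_entries _ g').2.2.1, h0]
  · show g.1 1 1 = (Tmat _ * g').1 1 1
    rw [(Tmat_mul_entries _ g').2.2.2, h1]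


noncomputable def valC (q : ℤ × ℤ × ℤ) (ζ : ℂ) : ℂ :=
  (q.1 : ℂ) * ζ ^ 2 + (q.2.1 : ℂ) * ζ + (q.2.2 : ℂ)

noncomputable def uC (g : SL2Z) (ζ : ℂ) : ℂ := ((g.1 0 0 : ℤ) : ℂ) * ζ + ((g.1 0 1 : ℤ) : ℂ)

lemma moebius_eq (g : SL2Z) (ζ : ℂ) : moebius g ζ = uC g ζ / denomSL g ζ := rfl

lemma denom_ne_zero (g : SL2Z) (ζ : ℂ) (hζ : ζ.im ≠ 0) : denomSL g ζ ≠ 0 := by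
  intro h
  have him := congrArg Complex.im h
  have hre := congrArg Complex.re h
  simp only [denomSL, Complex.add_im, Complex.mul_im, Complex.add_re, Complex.mul_re,
    Complex.intCast_im, Complex.intCast_re, Complex.zero_im, Complex.zero_re,
    zero_mul, mul_zero, add_zero, zero_add, sub_zero] at him hre
  have h10 : g.1 1 0 = 0 := by
    rcases mul_eq_zero.mp him with h' | h'
    · exact_mod_cast h'
    · exact absurd h' hζ
  have h11 : g.1 1 1 = 0 := by
    rw [h10] at hre
    push_cast at hre
    simpa using hre
  have hd := det_entries g
  rw [h10, h11] at hd
  simp at hd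

lemma uC_eq (g : SL2Z) (ζ : ℂ) (h : denomSL g ζ ≠ 0) :
    uC g ζ = moebius g ζ * denomSL g ζ := by
  rw [moebius_eq, div_mul_cancel₀ _ h]

lemma moebius_im (g : SL2Z) (ζ : ℂ) :
    (moebius g ζ).im = ζ.im / Complex.normSq (denomSL g ζ) := by
  rcases eq_or_ne (denomSL g ζ) 0 with h | h
  · rw [moebius_eq, h, div_zero, map_zero, div_zero, Complex.zero_im]
  · have hd : ((g.1 1 0 : ℝ) * ζ.re + (g.1 1 1 : ℝ)) ^ 2 + ((g.1 1 0 : ℝ) * ζ.im) ^ 2 ≠ 0 ∨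
        True := Or.inr trivial
    have hdet : ((g.1 0 0 : ℝ) * (g.1 1 1 : ℝ) - (g.1 0 1 : ℝ) * (g.1 1 0 : ℝ)) = 1 := by
      exact_mod_cast det_entries g
    have hns : Complex.normSq (denomSL g ζ) ≠ 0 := by
      simpa using h
    rw [moebius_eq, Complex.div_im, div_sub_div_same]
    congr 1
    simp only [uC, denomSL, Complex.add_im, Complex.mul_im, Complex.add_re, Complex.mul_re,
      Complex.intCast_im, Complex.intCast_re, zero_mul, mul_zero, add_zero, zero_add, sub_zero]
    linear_combination ζ.im * hdet

lemma val_formAct (a b c : ℤ) (τ : ℂ)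
    (hsum : (a : ℂ) * (τ + (starRingEnd ℂ) τ) = -(b:ℂ))
    (hprod : (a : ℂ) * (τ * (starRingEnd ℂ) τ) = (c:ℂ)) (g : SL2Z) (ζ : ℂ) :
    valC (formAct (a, b, c) g) ζ
      = (a:ℂ) * (uC g ζ - τ * denomSL g ζ) * (uC g ζ - (starRingEnd ℂ) τ * denomSL g ζ) := by
  have h1 : valC (formAct (a, b, c) g) ζ =
      (a:ℂ) * (uC g ζ)^2 + (b:ℂ) * (uC g ζ) * (denomSL g ζ) + (c:ℂ) * (denomSL g ζ)^2 := by
    have hd : ((g.1 0 0 : ℂ) * (g.1 1 1 : ℂ) - (g.1 0 1 : ℂ) * (g.1 1 0 : ℂ)) = 1 := by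
      exact_mod_cast det_entries g
    simp only [valC, formAct, uC, denomSL]
    push_cast
    ring
  rw [h1]
  linear_combination (uC g ζ * denomSL g ζ) * hsum - (denomSL g ζ)^2 * hprod


section Roots

variable {a b c : ℤ} {τ : ℂ}

lemma conj_root (hroot : (a:ℂ)*τ^2 + (b:ℂ)*τ + (c:ℂ) = 0) :
    (a:ℂ)*((starRingEnd ℂ) τ)^2 + (b:ℂ)*((starRingEnd ℂ) τ) + (c:ℂ) = 0 := by
  have h := congrArg (starRingEnd ℂ) hroot
  simpa [map_add, map_mul, map_pow] using h

lemma sum_eq (hτim : τ.im ≠ 0) (hroot : (a:ℂ)*τ^2 + (b:ℂ)*τ + (c:ℂ) = 0) :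
    (a:ℂ) * (τ + (starRingEnd ℂ) τ) = -(b:ℂ) := by
  have hconj := conj_root hroot
  have h1 : (τ - (starRingEnd ℂ) τ) * ((a:ℂ)*(τ + (starRingEnd ℂ) τ) + (b:ℂ)) = 0 := by
    linear_combination hroot - hconj
  rcases mul_eq_zero.mp h1 with h2 | h2
  · exfalso
    apply hτim
    have : (starRingEnd ℂ) τ = τ := by linear_combination -h2
    exact (Complex.conj_eq_iff_im.mp this)
  · linear_combination h2

lemma prod_eq (hτim : τ.im ≠ 0) (hroot : (a:ℂ)*τ^2 + (b:ℂ)*τ + (c:ℂ) = 0) :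
    (a:ℂ) * (τ * (starRingEnd ℂ) τ) = (c:ℂ) := by
  linear_combination (-1 : ℂ) * hroot + τ * sum_eq hτim hroot

end Roots

section Term

variable {k : ℕ} {a b c : ℤ} {τ z : ℂ}

lemma moebius_im_pos (g : SL2Z) (hzim : 0 < z.im) : 0 < (moebius g z).im := by
  rw [moebius_im]
  have h := denom_ne_zero g z (ne_of_gt hzim)
  have : 0 < Complex.normSq (denomSL g z) := by
    rcases lt_or_eq_of_le (Complex.normSq_nonneg (denomSL g z)) with h' | h'
    · exact h'
    · exact absurd (Complex.normSq_eq_zero.mp h'.symm) h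
  positivity

lemma sub_conj_ne (g : SL2Z) (hzim : 0 < z.im) (hτim : 0 < τ.im) :
    moebius g z - (starRingEnd ℂ) τ ≠ 0 := by
  intro h
  have him := congrArg Complex.im h
  simp only [Complex.sub_im, Complex.conj_im, Complex.zero_im, sub_neg_eq_add] at him
  have := moebius_im_pos g hzim
  linarith

lemma term_eq (ha : 0 < a) (hzim : 0 < z.im) (hτim : 0 < τ.im)
    (hroot : (a:ℂ)*τ^2 + (b:ℂ)*τ + (c:ℂ) = 0)
    (g : SL2Z) (hg : moebius g z ≠ τ) :
    denomSL g z ^ (-(2 * (k : ℤ))) * (moebius g z - (starRingEnd ℂ) τ) ^ (-(2 * (k:ℤ)))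
      * ((moebius g z - τ)/(moebius g z - (starRingEnd ℂ) τ)) ^ (-(k:ℤ))
    = (a:ℂ)^k * (valC (formAct (a,b,c) g) z)^(-(k:ℤ)) := by
  set w := denomSL g z with hwdef
  set m := moebius g z with hmdef
  have hw : w ≠ 0 := denom_ne_zero g z (ne_of_gt hzim)
  have hB : m - τ ≠ 0 := sub_ne_zero.mpr hg
  have hC : m - (starRingEnd ℂ) τ ≠ 0 := sub_conj_ne g hzim hτim
  have ha' : (a:ℂ) ≠ 0 := by exact_mod_cast ha.ne'
  have hval : valC (formAct (a,b,c) g) z = (a:ℂ) * ((w * (m - τ)) * (w * (m - (starRingEnd ℂ) τ))) := by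
    rw [val_formAct a b c τ (sum_eq (ne_of_gt hτim) hroot) (prod_eq (ne_of_gt hτim) hroot) g z,
      uC_eq g z hw]
    ring
  rw [hval]
  have h2k : (-(2*(k:ℤ))) = -((2*k : ℕ) : ℤ) := by push_cast; ring
  have hkk : (-(k:ℤ)) = -((k : ℕ) : ℤ) := rfl
  rw [h2k, hkk, zpow_neg, zpow_neg, zpow_neg, zpow_neg, zpow_natCast, zpow_natCast,
    zpow_natCast, zpow_natCast]
  rw [div_pow, mul_pow, mul_pow, mul_pow, two_mul, pow_add, pow_add]
  have hXw : w ^ k ≠ 0 := pow_ne_zero _ hw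
  have hXB : (m - τ) ^ k ≠ 0 := pow_ne_zero _ hB
  have hXC : (m - (starRingEnd ℂ) τ) ^ k ≠ 0 := pow_ne_zero _ hC
  have hXa : (a:ℂ) ^ k ≠ 0 := pow_ne_zero _ ha'
  field_simp
  rw [mul_pow (m - (starRingEnd ℂ) τ) w]
  ring

end Term


section Stab

variable {a b c D : ℤ} {τ : ℂ}

lemma lin_indep (hτim : τ.im ≠ 0) (p q : ℤ) (h : (p:ℂ)*τ + (q:ℂ) = 0) : p = 0 ∧ q = 0 := by
  have him := congrArg Complex.im h
  simp only [Complex.add_im, Complex.mul_im, Complex.intCast_im, Complex.intCast_re,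
    Complex.zero_im, zero_mul, mul_zero, add_zero, zero_add] at him
  have hp : p = 0 := by
    rcases mul_eq_zero.mp him with h' | h'
    · exact_mod_cast h'
    · exact absurd h' hτim
  refine ⟨hp, ?_⟩
  rw [hp] at h
  push_cast at h
  exact_mod_cast by simpa using h

lemma formAct_disc (hdisc : b^2 - 4*a*c = -D) (g : SL2Z) :
    (formAct (a,b,c) g).2.1^2 - 4*(formAct (a,b,c) g).1*(formAct (a,b,c) g).2.2 = -D := by
  have hdet := det_entries g
  have key : (formAct (a,b,c) g).2.1^2 - 4*(formAct (a,b,c) g).1*(formAct (a,b,c) g).2.2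
      = (b^2 - 4*a*c) * (g.1 0 0 * g.1 1 1 - g.1 0 1 * g.1 1 0)^2 := by
    simp only [formAct]
    ring
  rw [key, hdet, one_pow, mul_one, hdisc]

lemma formAct_four_a (hdisc : b^2 - 4*a*c = -D) (g : SL2Z) :
    4*a*(formAct (a,b,c) g).1 = (2*a*(g.1 0 0) + b*(g.1 1 0))^2 + D*(g.1 1 0)^2 := by
  simp only [formAct]
  linear_combination (-(g.1 1 0)^2) * hdisc

lemma formAct_pos (hD : 0 < D) (ha : 0 < a) (hdisc : b^2 - 4*a*c = -D) (g : SL2Z) :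
    0 < (formAct (a,b,c) g).1 := by
  have h4 := formAct_four_a (D := D) hdisc g
  rcases eq_or_ne (g.1 1 0) 0 with hγ | hγ
  · have hdet := det_entries g
    rw [hγ] at hdet h4
    simp only [mul_zero, sub_zero] at hdet
    rcases Int.mul_eq_one_iff_eq_one_or_neg_one.mp hdet with ⟨h1, _⟩ | ⟨h1, _⟩ <;>
      · rw [h1] at h4
        nlinarith [h4, ha]
  · have h1 : 1 ≤ (g.1 1 0)^2 := by
      have := Int.one_le_abs hγ
      nlinarith [this, _root_.sq_abs (g.1 1 0)]
    nlinarith [sq_nonneg (2*a*(g.1 0 0) + b*(g.1 1 0)), hD, ha, h4, h1]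

lemma stab_iff (hD : 0 < D) (ha : 0 < a) (hdisc : b^2 - 4*a*c = -D) (hτim : 0 < τ.im)
    (hroot : (a:ℂ)*τ^2 + (b:ℂ)*τ + (c:ℂ) = 0) (g : SL2Z) :
    formAct (a,b,c) g = (a,b,c) ↔ moebius g τ = τ := by
  have hτ' : τ.im ≠ 0 := ne_of_gt hτim
  have hw : denomSL g τ ≠ 0 := denom_ne_zero g τ hτ'
  have ha' : (a:ℂ) ≠ 0 := by exact_mod_cast ha.ne'
  have hval := val_formAct a b c τ (sum_eq hτ' hroot) (prod_eq hτ' hroot) g τ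
  constructor
  · intro hEq
    have h0 : valC (formAct (a,b,c) g) τ = 0 := by
      rw [hEq]
      simpa [valC] using hroot
    rw [hval] at h0
    rcases mul_eq_zero.mp h0 with h1 | h1
    · rcases mul_eq_zero.mp h1 with h2 | h2
      · exact absurd h2 ha'
      · -- uC g τ = τ * denomSL g τ
        have : uC g τ = τ * denomSL g τ := by linear_combination h2
        rw [moebius_eq, this, mul_div_cancel_right₀ _ hw]
    · exfalso
      have : uC g τ = (starRingEnd ℂ) τ * denomSL g τ := by linear_combination h1
      have hm : moebius g τ = (starRingEnd ℂ) τ := by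
        rw [moebius_eq, this, mul_div_cancel_right₀ _ hw]
      have := moebius_im_pos g hτim
      rw [hm, Complex.conj_im] at this
      linarith
  · intro hM
    have hu : uC g τ = τ * denomSL g τ := by
      rw [uC_eq g τ hw, hM]
    have h0 : valC (formAct (a,b,c) g) τ = 0 := by
      rw [hval, hu]
      ring
    rcases hQ : formAct (a,b,c) g with ⟨a', b', c'⟩
    have hd' : b'^2 - 4*a'*c' = -D := by
      have := formAct_disc (D := D) hdisc g
      rw [hQ] at this
      exact this
    have hpos : 0 < a' := by
      have := formAct_pos hD ha hdisc g
      rw [hQ] at this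
      exact this
    rw [hQ] at h0
    simp only [valC] at h0
    have hlin : ((a'*b - a*b' : ℤ) : ℂ) * τ + ((a'*c - a*c' : ℤ) : ℂ) = 0 := by
      push_cast
      linear_combination (a' : ℂ) * hroot - (a : ℂ) * h0
    obtain ⟨hp, hq⟩ := lin_indep hτ' _ _ hlin
    have hp' : a'*b = a*b' := by linarith
    have hq' : a'*c = a*c' := by linarith
    have key : D * a^2 = D * a'^2 := by
      linear_combination (a^2) * hd' - (a'^2) * hdisc + (a*b' + a'*b) * hp - (4*a*a') * hq
    have hsq : a^2 = a'^2 := mul_left_cancel₀ (ne_of_gt hD) key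
    have haa : a = a' := by nlinarith [hsq, ha, hpos]
    have hbb : b = b' := by
      have : a * b = a * b' := by rw [← haa] at hp'; linarith
      exact mul_left_cancel₀ (ne_of_gt ha) this
    have hcc : c = c' := by
      have : a * c = a * c' := by rw [← haa] at hq'; linarith
      exact mul_left_cancel₀ (ne_of_gt ha) this
    rw [haa, hbb, hcc]

end Stab


section Stab2

variable {a b c D : ℤ} {τ : ℂ}

lemma stab_beta_delta (ha : 0 < a) (hτim : 0 < τ.im)
    (hroot : (a:ℂ)*τ^2 + (b:ℂ)*τ + (c:ℂ) = 0) (g : SL2Z) (hM : moebius g τ = τ) :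
    a * g.1 1 1 = a * g.1 0 0 + b * g.1 1 0 ∧ a * g.1 0 1 = -(c * g.1 1 0) := by
  have hτ' : τ.im ≠ 0 := ne_of_gt hτim
  have hw : denomSL g τ ≠ 0 := denom_ne_zero g τ hτ'
  have hu : uC g τ = τ * denomSL g τ := by rw [uC_eq g τ hw, hM]
  -- expand: (α τ + β) = τ(γτ + δ) ⇒ γτ² + (δ-α)τ - β = 0; times a, use aτ² = -bτ-c
  have hτ2 : (a:ℂ) * τ^2 = -((b:ℂ)*τ) - (c:ℂ) := by linear_combination hroot
  have hlin : ((b*(g.1 1 0) + a*(g.1 0 0) - a*(g.1 1 1) : ℤ) : ℂ) * τ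
      + ((c*(g.1 1 0) + a*(g.1 0 1) : ℤ) : ℂ) = 0 := by
    push_cast
    simp only [uC, denomSL] at hu
    linear_combination ((a:ℂ)) * hu + ((g.1 1 0 : ℤ) : ℂ) * hτ2
  obtain ⟨h1, h2⟩ := lin_indep hτ' _ _ hlin
  constructor
  · linarith
  · linarith

lemma abs_le_of_sq_le_sq' (x y : ℤ) (hy : 0 ≤ y) (h : x^2 ≤ y^2) : -y ≤ x ∧ x ≤ y := by
  constructor
  · nlinarith [sq_nonneg (x + y), sq_nonneg (x - y), hy, h]
  · nlinarith [sq_nonneg (x + y), sq_nonneg (x - y), hy, h]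

lemma stab_finite (hD : 0 < D) (ha : 0 < a) (hdisc : b^2 - 4*a*c = -D) (hτim : 0 < τ.im)
    (hroot : (a:ℂ)*τ^2 + (b:ℂ)*τ + (c:ℂ) = 0) :
    Finite {g : SL2Z // moebius g τ = τ} := by
  set S : Set (ℤ × ℤ) := Set.Icc (-(1+|b|)) (1+|b|) ×ˢ Set.Icc (-(2*a)) (2*a) with hS
  have hSfin : S.Finite := (Set.finite_Icc _ _).prod (Set.finite_Icc _ _)
  haveI := hSfin.to_subtype
  have hmem : ∀ g : {g : SL2Z // moebius g τ = τ}, ((g.1.1 0 0, g.1.1 1 0) : ℤ × ℤ) ∈ S := by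
    rintro ⟨g, hg⟩
    have hfix : formAct (a,b,c) g = (a,b,c) := (stab_iff hD ha hdisc hτim hroot g).mpr hg
    have h4 := formAct_four_a (D := D) hdisc g
    rw [hfix] at h4
    have h4' : 4*a*a = (2*a*(g.1 0 0) + b*(g.1 1 0))^2 + D*(g.1 1 0)^2 := by simpa using h4
    have hγb : (g.1 1 0)^2 ≤ (2*a)^2 := by
      nlinarith [sq_nonneg (2*a*(g.1 0 0) + b*(g.1 1 0)), hD, sq_nonneg (g.1 1 0)]
    have hsq : (2*a*(g.1 0 0) + b*(g.1 1 0))^2 ≤ (2*a)^2 := by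
      nlinarith [sq_nonneg (g.1 1 0), hD]
    have h2a : (0:ℤ) < 2*a := by linarith
    obtain ⟨hγ1, hγ2⟩ := abs_le_of_sq_le_sq' _ _ (le_of_lt h2a) hγb
    obtain ⟨hs1, hs2⟩ := abs_le_of_sq_le_sq' _ _ (le_of_lt h2a) hsq
    have hbγ : |b * g.1 1 0| ≤ |b| * (2*a) := by
      rw [abs_mul]
      exact mul_le_mul_of_nonneg_left (abs_le.mpr ⟨hγ1, hγ2⟩) (abs_nonneg b)
    have hbγ1 : -(|b| * (2*a)) ≤ b * g.1 1 0 := (abs_le.mp hbγ).1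
    have hbγ2 : b * g.1 1 0 ≤ |b| * (2*a) := (abs_le.mp hbγ).2
    constructor
    · simp only [Set.mem_Icc]
      constructor
      · have h5 : (2*a) * (-(1+|b|)) ≤ (2*a) * (g.1 0 0) := by nlinarith [hs1, hbγ2]
        exact le_of_mul_le_mul_left h5 h2a
      · have h5 : (2*a) * (g.1 0 0) ≤ (2*a) * (1+|b|) := by nlinarith [hs2, hbγ1]
        exact le_of_mul_le_mul_left h5 h2a
    · exact Set.mem_Icc.mpr ⟨hγ1, hγ2⟩
  have hinj : Function.Injective
      (fun g : {g : SL2Z // moebius g τ = τ} => (⟨(g.1.1 0 0, g.1.1 1 0), hmem g⟩ : S)) := by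
    rintro ⟨g, hg⟩ ⟨g', hg'⟩ hEq
    simp only [Subtype.mk.injEq, Prod.mk.injEq] at hEq
    obtain ⟨h00, h10⟩ := hEq
    obtain ⟨hd1, hb1⟩ := stab_beta_delta ha hτim hroot g hg
    obtain ⟨hd2, hb2⟩ := stab_beta_delta ha hτim hroot g' hg'
    have h11 : g.1 1 1 = g'.1 1 1 := by
      apply mul_left_cancel₀ (ne_of_gt ha)
      rw [hd1, hd2, h00, h10]
    have h01 : g.1 0 1 = g'.1 0 1 := by
      apply mul_left_cancel₀ (ne_of_gt ha)
      rw [hb1, hb2, h10]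
    apply Subtype.ext
    apply Subtype.ext
    ext i j
    fin_cases i <;> fin_cases j <;> assumption
  exact Finite.of_injective _ hinj

lemma moebius_one (ζ : ℂ) : moebius 1 ζ = ζ := by
  simp [moebius, Matrix.SpecialLinearGroup.coe_one, Matrix.one_apply]

lemma formAct_cancel (q : ℤ × ℤ × ℤ) (g : SL2Z) :
    formAct (formAct q g) g⁻¹ = q := by
  rw [← formAct_mul, mul_inv_cancel, formAct_one]

lemma formAct_cancel' (q : ℤ × ℤ × ℤ) (g : SL2Z) :
    formAct (formAct q g⁻¹) g = q := by
  rw [← formAct_mul, inv_mul_cancel, formAct_one]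

/-- fibers of the orbit map are in bijection with the stabilizer -/
noncomputable def fiberEquiv (a b c : ℤ) (g₁ : SL2Z) :
    {g : SL2Z // formAct (a,b,c) g = formAct (a,b,c) g₁}
      ≃ {h : SL2Z // formAct (a,b,c) h = (a,b,c)} where
  toFun g := ⟨g.1 * g₁⁻¹, by
    have h := g.2
    have h2 : formAct (formAct (a,b,c) (g.1 * g₁⁻¹)) g₁ = formAct (a,b,c) g₁ := by
      rw [← formAct_mul, mul_assoc, inv_mul_cancel, mul_one, h]
    have h3 := congrArg (fun q => formAct q g₁⁻¹) h2
    simpa only [formAct_cancel] using h3⟩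
  invFun h := ⟨h.1 * g₁, by rw [formAct_mul, h.2]⟩
  left_inv g := by
    apply Subtype.ext
    simp [mul_assoc]
  right_inv h := by
    apply Subtype.ext
    simp [mul_assoc]

end Stab2


section SummHelpers

lemma summable_off_finite {ι : Type*} {f g : ι → ℝ} (hf : ∀ i, 0 ≤ f i)
    {s : Set ι} (hs : s.Finite) (hle : ∀ i ∉ s, f i ≤ g i) (hg : Summable g) : Summable f := by
  rw [← summable_subtype_and_compl (s := s)]
  constructor
  · haveI := hs.to_subtype
    exact Summable.of_finite
  · exact Summable.of_nonneg_of_le (fun i => hf i.1) (fun i => hle i.1 i.2) (hg.subtype _)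

lemma finite_int_abs_le (R : ℝ) : {j : ℤ | |(j:ℝ)| ≤ R}.Finite := by
  apply Set.Finite.subset (Set.finite_Icc (-⌈R⌉) ⌈R⌉)
  intro j hj
  simp only [Set.mem_setOf_eq, abs_le] at hj
  have hR := Int.le_ceil R
  simp only [Set.mem_Icc]
  constructor
  · have h1 : ((-⌈R⌉ : ℤ) : ℝ) ≤ (j : ℝ) := by push_cast; linarith
    exact_mod_cast h1
  · have h1 : (j : ℝ) ≤ ((⌈R⌉ : ℤ) : ℝ) := by push_cast; linarith
    exact_mod_cast h1

lemma summable_hfun {K : ℝ} (hK : 1 < K) {ε : ℝ} (hε : 0 < ε) :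
    Summable (fun j : ℤ => (max (|(j:ℝ)| - 1) ε) ^ (-K)) := by
  have hKpos : 0 < K := by linarith
  apply summable_off_finite (fun j => Real.rpow_nonneg (le_max_of_le_right hε.le) _)
    (finite_int_abs_le (2*ε + 2))
    (g := fun j : ℤ => (2:ℝ)^K * |(j:ℝ)|^(-K)) ?_
    (Summable.mul_left _ (Real.summable_abs_int_rpow hK))
  intro j hj
  simp only [Set.mem_setOf_eq, not_le] at hj
  have hj2 : (2:ℝ) ≤ |(j:ℝ)| := by linarith
  have h1 : |(j:ℝ)|/2 ≤ max (|(j:ℝ)| - 1) ε := le_max_of_le_left (by linarith)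
  have h2 : (0:ℝ) < |(j:ℝ)|/2 := by linarith
  calc (max (|(j:ℝ)| - 1) ε) ^ (-K) ≤ (|(j:ℝ)|/2) ^ (-K) :=
        Real.rpow_le_rpow_of_nonpos h2 h1 (neg_nonpos.mpr hKpos.le)
    _ = (2:ℝ)^K * |(j:ℝ)|^(-K) := by
        rw [Real.div_rpow (abs_nonneg _) (by norm_num : (0:ℝ) ≤ 2)]
        rw [div_eq_mul_inv, ← Real.rpow_neg (by norm_num : (0:ℝ) ≤ 2), neg_neg]
        ring

lemma abs_add_floor (x : ℝ) (n : ℤ) : |((n + ⌊x⌋ : ℤ) : ℝ)| - 1 ≤ |x + n| := by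
  have h1 := Int.floor_le x
  have h2 := Int.lt_floor_add_one x
  have h3 : |((n + ⌊x⌋ : ℤ) : ℝ)| ≤ |x + n| + 1 := by
    push_cast
    have he : (n:ℝ) + ⌊x⌋ = (x + n) - (x - ⌊x⌋) := by ring
    rw [he]
    calc |(x + n) - (x - ⌊x⌋)| ≤ |x + n| + |x - ⌊x⌋| := abs_sub _ _
      _ ≤ |x + n| + 1 := by
          have h4 : |x - (⌊x⌋:ℝ)| ≤ 1 := abs_le.mpr ⟨by linarith, by linarith⟩
          linarith
  linarith

end SummHelpers

lemma denom_Tmat (n : ℤ) (g : SL2Z) (ζ : ℂ) : denomSL (Tmat n * g) ζ = denomSL g ζ := by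
  obtain ⟨-, -, h10, h11⟩ := Tmat_mul_entries n g
  simp only [denomSL, h10, h11]

lemma uC_Tmat (n : ℤ) (g : SL2Z) (ζ : ℂ) :
    uC (Tmat n * g) ζ = uC g ζ + (n:ℂ) * denomSL g ζ := by
  obtain ⟨h00, h01, -, -⟩ := Tmat_mul_entries n g
  simp only [uC, denomSL, h00, h01]
  push_cast
  ring

lemma moebius_Tmat (n : ℤ) (g : SL2Z) (ζ : ℂ) (h : denomSL g ζ ≠ 0) :
    moebius (Tmat n * g) ζ = moebius g ζ + (n:ℂ) := by
  rw [moebius_eq, moebius_eq, denom_Tmat, uC_Tmat, add_div, mul_div_cancel_right₀ _ h]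

lemma val_abs {a b c : ℤ} {τ z : ℂ} (ha : 0 < a)
    (hsum : (a : ℂ) * (τ + (starRingEnd ℂ) τ) = -(b:ℂ))
    (hprod : (a : ℂ) * (τ * (starRingEnd ℂ) τ) = (c:ℂ)) (hzim : 0 < z.im) (g : SL2Z) :
    ‖valC (formAct (a,b,c) g) z‖
      = (a:ℝ) * ((‖denomSL g z‖)^2
          * (‖moebius g z - τ‖ * ‖moebius g z - (starRingEnd ℂ) τ‖)) := by
  have hw := denom_ne_zero g z (ne_of_gt hzim)
  have hval : valC (formAct (a,b,c) g) z = (a:ℂ) * ((denomSL g z * (moebius g z - τ))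
      * (denomSL g z * (moebius g z - (starRingEnd ℂ) τ))) := by
    rw [val_formAct a b c τ hsum hprod g z, uC_eq g z hw]
    ring
  rw [hval, norm_mul, norm_mul, norm_mul, norm_mul]
  rw [Complex.norm_intCast, abs_of_pos (by exact_mod_cast ha : (0:ℝ) < (a:ℝ))]
  ring

/-- the summand whose summability is the analytic heart -/
noncomputable def Wf (a b c : ℤ) (z : ℂ) (κ : ℝ) (g : SL2Z) : ℝ :=
  ‖valC (formAct (a,b,c) g) z‖ ^ (-κ)

lemma Wf_nonneg (a b c : ℤ) (z : ℂ) (κ : ℝ) (g : SL2Z) : 0 ≤ Wf a b c z κ g :=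
  Real.rpow_nonneg (norm_nonneg _) _

lemma Wf_Tmat_le {a b c : ℤ} {τ z : ℂ} {κ : ℝ} (ha : 0 < a)
    (hsum : (a : ℂ) * (τ + (starRingEnd ℂ) τ) = -(b:ℂ))
    (hprod : (a : ℂ) * (τ * (starRingEnd ℂ) τ) = (c:ℂ)) (hzim : 0 < z.im) (hκ : 0 < κ)
    (g₀ : SL2Z) (n : ℤ) {t : ℝ} (ht : 0 < t)
    (h1 : t ≤ ‖moebius g₀ z + (n:ℂ) - τ‖)
    (h2 : t ≤ ‖moebius g₀ z + (n:ℂ) - (starRingEnd ℂ) τ‖) :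
    Wf a b c z κ (Tmat n * g₀)
      ≤ ((a:ℝ) * ‖denomSL g₀ z‖ ^ 2) ^ (-κ) * ((t ^ 2) ^ (-κ)) := by
  have hw := denom_ne_zero g₀ z (ne_of_gt hzim)
  rw [Wf, val_abs ha hsum hprod hzim, denom_Tmat, moebius_Tmat n g₀ z hw]
  have ha' : (0:ℝ) < (a:ℝ) := by exact_mod_cast ha
  have key : (a:ℝ) * ((‖denomSL g₀ z‖)^2
      * (‖moebius g₀ z + (n:ℂ) - τ‖ * ‖moebius g₀ z + (n:ℂ) - (starRingEnd ℂ) τ‖))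
      = ((a:ℝ) * ‖denomSL g₀ z‖ ^ 2)
        * (‖moebius g₀ z + (n:ℂ) - τ‖ * ‖moebius g₀ z + (n:ℂ) - (starRingEnd ℂ) τ‖) := by
    ring
  rw [key, Real.mul_rpow (by positivity) (by positivity)]
  apply mul_le_mul_of_nonneg_left ?_ (Real.rpow_nonneg (by positivity) _)
  apply Real.rpow_le_rpow_of_nonpos (by positivity) ?_ (neg_nonpos.mpr hκ.le)
  calc t^2 = t*t := sq t
    _ ≤ _ := mul_le_mul h1 h2 ht.le (le_trans ht.le h1)

/-- fibers of the bottom-row map are parametrized by ℤ -/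
noncomputable def fiberZEquiv (g₀ : SL2Z) (r : ℤ × ℤ) (hr : (g₀.1 1 0, g₀.1 1 1) = r) :
    ℤ ≃ {g : SL2Z // (g.1 1 0, g.1 1 1) = r} where
  toFun n := ⟨Tmat n * g₀, by
    obtain ⟨-, -, h10, h11⟩ := Tmat_mul_entries n g₀
    rw [h10, h11, hr]⟩
  invFun g := g.1.1 0 1 * g₀.1 0 0 - g.1.1 0 0 * g₀.1 0 1
  left_inv n := by
    obtain ⟨h00, h01, -, -⟩ := Tmat_mul_entries n g₀
    simp only [h00, h01]
    linear_combination n * det_entries g₀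
  right_inv g := by
    have h := g.2.trans hr.symm
    rw [Prod.ext_iff] at h
    obtain ⟨h10, h11⟩ := h
    exact Subtype.ext (eq_Tmat_mul_of_row_eq g.1 g₀ h10 h11).symm


section Fibers

variable {a b c : ℤ} {τ z : ℂ} {κ : ℝ}

noncomputable def epsT (τ : ℂ) : ℝ := min (τ.im / 2) 1

noncomputable def hfunT (τ : ℂ) (κ : ℝ) (j : ℤ) : ℝ :=
  (max (|(j:ℝ)| - 1) (epsT τ)) ^ (-(2*κ))

lemma epsT_pos (hτim : 0 < τ.im) : 0 < epsT τ := lt_min (by linarith) one_pos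

lemma epsT_le_one : epsT τ ≤ 1 := min_le_right _ _

lemma hfunT_nonneg (hτim : 0 < τ.im) (j : ℤ) : 0 ≤ hfunT τ κ j :=
  Real.rpow_nonneg (le_max_of_le_right (epsT_pos hτim).le) _

lemma hfunT_summable (hτim : 0 < τ.im) (hκ : 2 ≤ κ) : Summable (hfunT τ κ) :=
  summable_hfun (by linarith) (epsT_pos hτim)

lemma rpow_sq_neg {x : ℝ} (hx : 0 ≤ x) (κ : ℝ) : (x^2) ^ (-κ) = x ^ (-(2*κ)) := by
  rw [← Real.rpow_natCast x 2, ← Real.rpow_mul hx]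
  congr 1
  push_cast
  ring

lemma re_shift (g₀ : SL2Z) (τ z : ℂ) (n : ℤ) :
    (moebius g₀ z + (n:ℂ) - τ).re = ((moebius g₀ z).re - τ.re) + n := by
  simp only [Complex.sub_re, Complex.add_re, Complex.intCast_re]
  ring

lemma re_shift' (g₀ : SL2Z) (τ z : ℂ) (n : ℤ) :
    (moebius g₀ z + (n:ℂ) - (starRingEnd ℂ) τ).re = ((moebius g₀ z).re - τ.re) + n := by
  simp only [Complex.sub_re, Complex.add_re, Complex.intCast_re, Complex.conj_re]
  ring

lemma abs_le_P1 (g₀ : SL2Z) (τ z : ℂ) (n : ℤ) :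
    |((moebius g₀ z).re - τ.re) + (n:ℝ)| ≤ ‖moebius g₀ z + (n:ℂ) - τ‖ := by
  have h := Complex.abs_re_le_norm (moebius g₀ z + (n:ℂ) - τ)
  rwa [re_shift] at h

lemma abs_le_P2 (g₀ : SL2Z) (τ z : ℂ) (n : ℤ) :
    |((moebius g₀ z).re - τ.re) + (n:ℝ)|
      ≤ ‖moebius g₀ z + (n:ℂ) - (starRingEnd ℂ) τ‖ := by
  have h := Complex.abs_re_le_norm (moebius g₀ z + (n:ℂ) - (starRingEnd ℂ) τ)
  rwa [re_shift'] at h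

lemma hfun_ge (τ : ℂ) (κ : ℝ) (hκ : 0 < κ) (x₀ : ℝ) (n : ℤ) {t : ℝ}
    (ht : max (|x₀ + (n:ℝ)|) (epsT τ) ≤ t) (hε : 0 < epsT τ) :
    (t^2) ^ (-κ) ≤ hfunT τ κ (n + ⌊x₀⌋) := by
  have hb : max (|((n + ⌊x₀⌋ : ℤ) : ℝ)| - 1) (epsT τ) ≤ t :=
    le_trans (max_le_max (abs_add_floor x₀ n) (le_refl (epsT τ))) ht
  have hmaxpos : 0 < max (|((n + ⌊x₀⌋ : ℤ) : ℝ)| - 1) (epsT τ) :=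
    lt_of_lt_of_le hε (le_max_right _ _)
  rw [rpow_sq_neg (le_trans hmaxpos.le hb) κ, hfunT]
  exact Real.rpow_le_rpow_of_nonpos hmaxpos hb (by linarith)

lemma fiber_summable (ha : 0 < a)
    (hsum : (a : ℂ) * (τ + (starRingEnd ℂ) τ) = -(b:ℂ))
    (hprod : (a : ℂ) * (τ * (starRingEnd ℂ) τ) = (c:ℂ))
    (hzim : 0 < z.im) (hτim : 0 < τ.im) (hκ : 2 ≤ κ) (g₀ : SL2Z) :
    Summable (fun n : ℤ => Wf a b c z κ (Tmat n * g₀)) := by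
  have hκ0 : 0 < κ := by linarith
  have hε := epsT_pos (τ := τ) hτim
  set x₀ : ℝ := (moebius g₀ z).re - τ.re with hx₀
  set C : ℝ := ((a:ℝ) * ‖denomSL g₀ z‖ ^ 2) ^ (-κ) with hC
  have hCnn : 0 ≤ C := Real.rpow_nonneg (by positivity) _
  apply summable_off_finite (fun n => Wf_nonneg a b c z κ _)
    (s := {n : ℤ | |x₀ + (n:ℝ)| < 1}) ?_ ?_
    (g := fun n : ℤ => C * hfunT τ κ (n + ⌊x₀⌋))
    (Summable.mul_left C ((hfunT_summable hτim hκ).comp_injective (add_left_injective ⌊x₀⌋)))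
  · apply Set.Finite.subset (finite_int_abs_le (1 + |x₀|))
    intro n hn
    simp only [Set.mem_setOf_eq] at hn ⊢
    have h1 : |(n:ℝ)| ≤ |x₀ + n| + |x₀| := by
      have h2 := abs_sub (x₀ + (n:ℝ)) x₀
      simpa using h2
    linarith
  · intro n hn
    simp only [Set.mem_setOf_eq, not_lt] at hn
    have ht : (0:ℝ) < |x₀ + (n:ℝ)| := by linarith
    have hb := Wf_Tmat_le ha hsum hprod hzim hκ0 g₀ n ht
      (abs_le_P1 g₀ τ z n) (abs_le_P2 g₀ τ z n)
    refine le_trans hb (mul_le_mul_of_nonneg_left ?_ hCnn)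
    apply hfun_ge τ κ hκ0 x₀ n ?_ hε
    exact max_le (le_refl _) (le_trans epsT_le_one hn)

lemma coset_tsum_bound (ha : 0 < a)
    (hsum : (a : ℂ) * (τ + (starRingEnd ℂ) τ) = -(b:ℂ))
    (hprod : (a : ℂ) * (τ * (starRingEnd ℂ) τ) = (c:ℂ))
    (hzim : 0 < z.im) (hτim : 0 < τ.im) (hκ : 2 ≤ κ) (g₀ : SL2Z)
    (hgood : 2 * z.im / τ.im ≤ (‖denomSL g₀ z‖)^2) :
    ∑' n : ℤ, Wf a b c z κ (Tmat n * g₀)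
      ≤ ((a:ℝ) * ‖denomSL g₀ z‖ ^ 2) ^ (-κ) * ∑' j : ℤ, hfunT τ κ j := by
  have hκ0 : 0 < κ := by linarith
  have hε := epsT_pos (τ := τ) hτim
  set x₀ : ℝ := (moebius g₀ z).re - τ.re with hx₀
  set C : ℝ := ((a:ℝ) * ‖denomSL g₀ z‖ ^ 2) ^ (-κ) with hC
  have hCnn : 0 ≤ C := Real.rpow_nonneg (by positivity) _
  -- imaginary part facts
  have hw := denom_ne_zero g₀ z (ne_of_gt hzim)
  have hnsq : 0 < Complex.normSq (denomSL g₀ z) := by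
    rcases lt_or_eq_of_le (Complex.normSq_nonneg (denomSL g₀ z)) with h' | h'
    · exact h'
    · exact absurd (Complex.normSq_eq_zero.mp h'.symm) hw
  have hy₀ : (moebius g₀ z).im = z.im / Complex.normSq (denomSL g₀ z) := moebius_im g₀ z
  have hy₀pos : 0 < (moebius g₀ z).im := moebius_im_pos g₀ hzim
  have hnsq_eq : Complex.normSq (denomSL g₀ z) = (‖denomSL g₀ z‖)^2 :=
    (Complex.sq_norm _).symm
  have hy₀le : (moebius g₀ z).im ≤ τ.im / 2 := by
    rw [hy₀, hnsq_eq, div_le_iff₀ (pow_pos (norm_pos_iff.mpr hw) 2)]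
    rw [div_le_iff₀ (by positivity : (0:ℝ) < τ.im)] at hgood
    nlinarith [hgood]
  -- per-n bound
  have hbound : ∀ n : ℤ, Wf a b c z κ (Tmat n * g₀) ≤ C * hfunT τ κ (n + ⌊x₀⌋) := by
    intro n
    set t : ℝ := max (|x₀ + (n:ℝ)|) (epsT τ) with htdef
    have ht : 0 < t := lt_of_lt_of_le hε (le_max_right _ _)
    have h1 : t ≤ ‖moebius g₀ z + (n:ℂ) - τ‖ := by
      apply max_le (abs_le_P1 g₀ τ z n)
      -- ε ≤ |Im| ≤ abs
      have him : (moebius g₀ z + (n:ℂ) - τ).im = (moebius g₀ z).im - τ.im := by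
        simp [Complex.sub_im, Complex.add_im, Complex.intCast_im]
      have habs := Complex.abs_im_le_norm (moebius g₀ z + (n:ℂ) - τ)
      rw [him] at habs
      have h3 : τ.im / 2 ≤ |(moebius g₀ z).im - τ.im| := by
        rw [abs_sub_comm, _root_.abs_of_nonneg (by linarith)]
        linarith
      exact le_trans (min_le_left _ _) (le_trans h3 habs)
    have h2 : t ≤ ‖moebius g₀ z + (n:ℂ) - (starRingEnd ℂ) τ‖ := by
      apply max_le (abs_le_P2 g₀ τ z n)
      have him : (moebius g₀ z + (n:ℂ) - (starRingEnd ℂ) τ).im = (moebius g₀ z).im + τ.im := by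
        simp [Complex.sub_im, Complex.add_im, Complex.intCast_im, Complex.conj_im]
      have habs := Complex.abs_im_le_norm (moebius g₀ z + (n:ℂ) - (starRingEnd ℂ) τ)
      rw [him] at habs
      have h3 : (moebius g₀ z).im + τ.im ≤ |(moebius g₀ z).im + τ.im| := le_abs_self _
      have h4 : epsT τ ≤ (moebius g₀ z).im + τ.im := by
        unfold epsT
        have h5 := min_le_left (τ.im/2) (1:ℝ)
        linarith
      linarith
    refine le_trans (Wf_Tmat_le ha hsum hprod hzim hκ0 g₀ n ht h1 h2) ?_
    exact mul_le_mul_of_nonneg_left (hfun_ge τ κ hκ0 x₀ n (le_refl t) hε) hCnn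
  -- sum up
  have hs1 : Summable (fun n : ℤ => Wf a b c z κ (Tmat n * g₀)) :=
    fiber_summable ha hsum hprod hzim hτim hκ g₀
  have hs2 : Summable (fun n : ℤ => C * hfunT τ κ (n + ⌊x₀⌋)) :=
    Summable.mul_left C ((hfunT_summable hτim hκ).comp_injective (add_left_injective ⌊x₀⌋))
  calc ∑' n : ℤ, Wf a b c z κ (Tmat n * g₀) ≤ ∑' n : ℤ, C * hfunT τ κ (n + ⌊x₀⌋) :=
        Summable.tsum_le_tsum hbound hs1 hs2
    _ = C * ∑' n : ℤ, hfunT τ κ (n + ⌊x₀⌋) := tsum_mul_left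
    _ = C * ∑' j : ℤ, hfunT τ κ j := by
        congr 1
        exact (Equiv.addRight ⌊x₀⌋).tsum_eq (hfunT τ κ)

lemma core_summable (ha : 0 < a)
    (hsum : (a : ℂ) * (τ + (starRingEnd ℂ) τ) = -(b:ℂ))
    (hprod : (a : ℂ) * (τ * (starRingEnd ℂ) τ) = (c:ℂ))
    (hzim : 0 < z.im) (hτim : 0 < τ.im) (hκ : 2 ≤ κ) :
    Summable (Wf a b c z κ) := by
  have hκ0 : 0 < κ := by linarith
  set Z : UpperHalfPlane := ⟨z, hzim⟩ with hZ
  set H : ℝ := ∑' j, hfunT τ κ j with hH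
  have hH0 : 0 ≤ H := tsum_nonneg (fun j => hfunT_nonneg hτim j)
  have hnn : ∀ p : (Σ r : ℤ × ℤ, {g : SL2Z // (g.1 1 0, g.1 1 1) = r}),
      0 ≤ (Wf a b c z κ ∘ (Equiv.sigmaFiberEquiv (fun g : SL2Z => (g.1 1 0, g.1 1 1)))) p :=
    fun p => Wf_nonneg _ _ _ _ _ _
  rw [← (Equiv.sigmaFiberEquiv (fun g : SL2Z => (g.1 1 0, g.1 1 1))).summable_iff]
  refine (summable_sigma_of_nonneg hnn).mpr ⟨?_, ?_⟩
  · intro r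
    by_cases hne : Nonempty {g : SL2Z // (g.1 1 0, g.1 1 1) = r}
    · rcases hne with ⟨⟨g₀, hg₀⟩⟩
      have hs := fiber_summable ha hsum hprod hzim hτim hκ g₀
      exact (fiberZEquiv g₀ r hg₀).summable_iff.mp hs
    · haveI := not_nonempty_iff.mp hne
      exact Summable.of_finite
  · apply summable_off_finite
      (f := fun r : ℤ × ℤ => ∑' (y : {g : SL2Z // (g.1 1 0, g.1 1 1) = r}),
        (Wf a b c z κ ∘ (Equiv.sigmaFiberEquiv (fun g : SL2Z => (g.1 1 0, g.1 1 1)))) ⟨r, y⟩)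
      (fun r => tsum_nonneg fun y => Wf_nonneg _ _ _ _ _ _)
      (s := {r : ℤ × ℤ | (‖(r.1:ℂ) * z + (r.2:ℂ)‖)^2 < 2 * z.im / τ.im}) ?_ ?_
      (g := fun r : ℤ × ℤ => ((a:ℝ) ^ (-κ) * H) * ‖(r.1:ℂ) * z + (r.2:ℂ)‖ ^ (-(2*κ)))
      ?_
    · -- finiteness of the bad set
      set R : ℝ := Real.sqrt (2 * z.im / τ.im) with hR
      apply Set.Finite.subset (Set.Finite.prod (finite_int_abs_le (R / z.im))
        (finite_int_abs_le (R + R / z.im * ‖z‖)))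
      rintro ⟨γ, δ⟩ hγδ
      simp only [Set.mem_setOf_eq] at hγδ
      have habs : 0 ≤ ‖(γ:ℂ) * z + (δ:ℂ)‖ := norm_nonneg _
      have hwR : ‖(γ:ℂ) * z + (δ:ℂ)‖ < R := by
        rw [hR]
        exact (Real.lt_sqrt habs).mpr hγδ
      have him : ((γ:ℂ) * z + (δ:ℂ)).im = (γ:ℝ) * z.im := by
        simp [Complex.add_im, Complex.mul_im, Complex.intCast_im, Complex.intCast_re]
      have hγb : |(γ:ℝ)| ≤ R / z.im := by
        rw [le_div_iff₀ hzim]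
        have h1 : |(γ:ℝ)| * z.im = |(γ:ℝ) * z.im| := by
          rw [abs_mul, _root_.abs_of_pos hzim]
        rw [h1, ← him]
        exact le_trans (Complex.abs_im_le_norm _) hwR.le
      constructor
      · exact hγb
      · show |(δ:ℝ)| ≤ R + R / z.im * ‖z‖
        have h2 : (δ:ℂ) = ((γ:ℂ)*z + (δ:ℂ)) - (γ:ℂ)*z := by ring
        have h3 : ‖(δ:ℂ)‖ ≤ ‖(γ:ℂ)*z + (δ:ℂ)‖ + ‖(γ:ℂ)*z‖ := by
          rw [h2]
          simpa using norm_sub_le ((γ:ℂ)*z + (δ:ℂ)) ((γ:ℂ)*z)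
        have h4 : ‖(γ:ℂ)*z‖ = |(γ:ℝ)| * ‖z‖ := by
          rw [norm_mul, Complex.norm_intCast]
        have h5 : |(δ:ℝ)| = ‖((δ:ℤ):ℂ)‖ := (Complex.norm_intCast δ).symm
        rw [h5]
        have h6 : |(γ:ℝ)| * ‖z‖ ≤ R / z.im * ‖z‖ :=
          mul_le_mul_of_nonneg_right hγb (norm_nonneg _)
        rw [h4] at h3
        linarith
    · -- pointwise bound off the bad set
      rintro ⟨γ, δ⟩ hr
      simp only [Set.mem_setOf_eq, not_lt] at hr
      by_cases hne : Nonempty {g : SL2Z // (g.1 1 0, g.1 1 1) = (γ, δ)}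
      · rcases hne with ⟨⟨g₀, hg₀⟩⟩
        have h1 : g₀.1 1 0 = γ := congrArg Prod.fst hg₀
        have h2 : g₀.1 1 1 = δ := congrArg Prod.snd hg₀
        have hwid : denomSL g₀ z = (γ:ℂ) * z + (δ:ℂ) := by
          rw [denomSL, h1, h2]
        have hgood : 2 * z.im / τ.im ≤ (‖denomSL g₀ z‖)^2 := by
          rw [hwid]; exact hr
        have htsum : ∑' (y : {g : SL2Z // (g.1 1 0, g.1 1 1) = (γ, δ)}), Wf a b c z κ y.1
            = ∑' n : ℤ, Wf a b c z κ (Tmat n * g₀) :=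
          ((fiberZEquiv g₀ (γ, δ) hg₀).tsum_eq _).symm
        show ∑' (y : {g : SL2Z // (g.1 1 0, g.1 1 1) = (γ, δ)}), Wf a b c z κ y.1 ≤ _
        rw [htsum]
        refine le_trans (coset_tsum_bound ha hsum hprod hzim hτim hκ g₀ hgood) ?_
        apply le_of_eq
        rw [Real.mul_rpow (by positivity) (by positivity), hwid,
          rpow_sq_neg (norm_nonneg _) κ]
        ring
      · haveI := not_nonempty_iff.mp hne
        show (∑' (y : {g : SL2Z // (g.1 1 0, g.1 1 1) = (γ, δ)}), Wf a b c z κ y.1) ≤ _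
        rw [tsum_empty]
        have : 0 ≤ (a:ℝ) ^ (-κ) * H := mul_nonneg (Real.rpow_nonneg (by positivity) _) hH0
        exact mul_nonneg this (Real.rpow_nonneg (norm_nonneg _) _)
    · -- comparator summable
      apply Summable.mul_left
      have hEis : Summable (fun x : Fin 2 → ℤ =>
          ‖(x 0 : ℂ) * z + (x 1 : ℂ)‖ ^ (-(2*κ))) := by
        apply Summable.of_nonneg_of_le (fun x => Real.rpow_nonneg (norm_nonneg _) _)
          (fun x => ?_)
          ((EisensteinSeries.summable_one_div_norm_rpow (by linarith : (2:ℝ) < 2*κ)).mul_left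
            ((EisensteinSeries.r Z) ^ (-(2*κ))))
        exact EisensteinSeries.summand_bound Z (by linarith : (0:ℝ) ≤ 2*κ) x
      exact (finTwoArrowEquiv ℤ).summable_iff.mp hEis

end Fibers

end Stmt17

lemma tsum_card_smul {β γ : Type*} (π : γ → β) (v : β → ℂ) (N : ℕ)
    (hfin : ∀ b : β, Finite {g : γ // π g = b})
    (hfib : ∀ b : β, Nat.card {g : γ // π g = b} = N)
    (hsum : Summable (fun g : γ => v (π g))) :
    ∑' g : γ, v (π g) = (N:ℂ) * ∑' b : β, v b := by
  let e := Equiv.sigmaFiberEquiv π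
  have hsig : Summable (fun p : (Σ b : β, {g : γ // π g = b}) => v (π (e p))) :=
    e.summable_iff.mpr hsum
  rw [← e.tsum_eq (fun g : γ => v (π g)), hsig.tsum_sigma]
  have hinner : ∀ b : β, ∑' (y : {g : γ // π g = b}), v (π (e ⟨b, y⟩))
      = (N:ℂ) * v b := by
    intro b
    have hconst : ∀ y : {g : γ // π g = b}, v (π (e ⟨b, y⟩)) = v b := by
      intro y
      show v (π y.1) = v b
      rw [y.2]
    rw [tsum_congr hconst]
    haveI : Finite {g : γ // π g = b} := hfin b
    haveI : Fintype {g : γ // π g = b} := Fintype.ofFinite _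
    rw [tsum_fintype, Finset.sum_const, Finset.card_univ, ← Nat.card_eq_fintype_card,
      hfib b, nsmul_eq_mul]
  exact (tsum_congr hinner).trans tsum_mul_left


open Stmt17 in
/-- Let `k ≥ 2`, let `Q = [a,b,c]` be positive definite of discriminant `−D`
with CM-point `τ_Q` and `v_Q = √D/(2a)`, let `O(Q)` be the `SL₂(ℤ)`-orbit of `Q` and
`ω = (1/2)#{M : M·τ_Q = τ_Q}`. Then for every `z` in the upper half-plane not in the
`SL₂(ℤ)`-orbit of `τ_Q`, both series below converge absolutely and
`D^{k/2} ∑_{𝒬 ∈ O(Q)} 𝒬(z,1)^{−k}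
  = ((2v_Q)^k/(2ω)) ∑_{M ∈ SL₂(ℤ)} (γz+δ)^{−2k}(M·z − conj τ_Q)^{−2k} X_{τ_Q}(M·z)^{−k}`. -/
theorem stmt_17 (k : ℕ) (hk : 2 ≤ k) (a b c D : ℤ) (hD : 0 < D) (ha : 0 < a)
    (hdisc : b ^ 2 - 4 * a * c = -D)
    (τ : UpperHalfPlane)
    (hτ : (τ : ℂ) = (-(b : ℂ) + (Real.sqrt D : ℂ) * Complex.I) / (2 * (a : ℂ)))
    (vQ : ℝ) (hvQ : vQ = Real.sqrt D / (2 * a))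
    (ω : ℝ)
    (hω : ω = (Nat.card {g : Matrix.SpecialLinearGroup (Fin 2) ℤ //
        moebius g (τ : ℂ) = (τ : ℂ)} : ℝ) / 2)
    (z : UpperHalfPlane)
    (hz : ∀ g : Matrix.SpecialLinearGroup (Fin 2) ℤ, moebius g (z : ℂ) ≠ (τ : ℂ)) :
    Summable (fun q : {q : ℤ × ℤ × ℤ //
          ∃ g : Matrix.SpecialLinearGroup (Fin 2) ℤ, q = formAct (a, b, c) g} =>
        ‖(((q.1.1 : ℂ) * (z : ℂ) ^ 2 + (q.1.2.1 : ℂ) * (z : ℂ)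
            + (q.1.2.2 : ℂ)) ^ (-(k : ℤ)))‖)
    ∧ Summable (fun g : Matrix.SpecialLinearGroup (Fin 2) ℤ =>
        ‖(denomSL g (z : ℂ) ^ (-(2 * (k : ℤ)))
          * (moebius g (z : ℂ) - (starRingEnd ℂ) (τ : ℂ)) ^ (-(2 * (k : ℤ)))
          * ((moebius g (z : ℂ) - (τ : ℂ))
              / (moebius g (z : ℂ) - (starRingEnd ℂ) (τ : ℂ))) ^ (-(k : ℤ)))‖)
    ∧ ((Real.sqrt D ^ k : ℝ) : ℂ)
          * ∑' q : {q : ℤ × ℤ × ℤ //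
              ∃ g : Matrix.SpecialLinearGroup (Fin 2) ℤ, q = formAct (a, b, c) g},
            ((q.1.1 : ℂ) * (z : ℂ) ^ 2 + (q.1.2.1 : ℂ) * (z : ℂ) + (q.1.2.2 : ℂ)) ^ (-(k : ℤ))
        = (((2 * vQ) ^ k / (2 * ω) : ℝ) : ℂ)
            * ∑' g : Matrix.SpecialLinearGroup (Fin 2) ℤ,
              denomSL g (z : ℂ) ^ (-(2 * (k : ℤ)))
                * (moebius g (z : ℂ) - (starRingEnd ℂ) (τ : ℂ)) ^ (-(2 * (k : ℤ)))
                * ((moebius g (z : ℂ) - (τ : ℂ))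
                    / (moebius g (z : ℂ) - (starRingEnd ℂ) (τ : ℂ))) ^ (-(k : ℤ)) := by
  have hτim : 0 < (τ : ℂ).im := τ.2
  have hzim : 0 < (z : ℂ).im := z.2
  have haC : (a:ℂ) ≠ 0 := Int.cast_ne_zero.mpr ha.ne'
  have hDR : (0:ℝ) ≤ (D:ℝ) := by exact_mod_cast hD.le
  have hs2 : ((Real.sqrt D : ℝ) : ℂ)^2 = (D:ℂ) := by
    have h1 : (Real.sqrt D)^2 = (D:ℝ) := Real.sq_sqrt hDR
    calc ((Real.sqrt D : ℝ):ℂ)^2 = ((Real.sqrt D ^ 2 : ℝ) : ℂ) := by push_cast; ring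
      _ = (D:ℂ) := by rw [h1]; norm_cast
  have h2a : (2*(a:ℂ)) ≠ 0 := by
    simp only [ne_eq, mul_eq_zero, not_or]
    exact ⟨two_ne_zero, haC⟩
  have hτc : (τ:ℂ) * (2*(a:ℂ)) = -(b:ℂ) + ((Real.sqrt D : ℝ) : ℂ) * Complex.I := by
    rw [hτ]
    field_simp
  have hsqI : (2*(a:ℂ)*(τ:ℂ) + (b:ℂ))^2 = -(D:ℂ) := by
    have hI : 2*(a:ℂ)*(τ:ℂ) + (b:ℂ) = ((Real.sqrt D : ℝ):ℂ) * Complex.I := by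
      linear_combination hτc
    rw [hI, mul_pow, Complex.I_sq, hs2]
    ring
  have hdC : (b:ℂ)^2 - 4*(a:ℂ)*(c:ℂ) = -(D:ℂ) := by exact_mod_cast hdisc
  have hroot : (a:ℂ)*(τ:ℂ)^2 + (b:ℂ)*(τ:ℂ) + (c:ℂ) = 0 := by
    have h4 : (4*(a:ℂ)) * ((a:ℂ)*(τ:ℂ)^2 + (b:ℂ)*(τ:ℂ) + (c:ℂ)) = 0 := by
      linear_combination hsqI - hdC
    rcases mul_eq_zero.mp h4 with h | h
    · exact absurd h (by simp only [ne_eq, mul_eq_zero, not_or]; exact ⟨by norm_num, haC⟩)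
    · exact h
  have hsum := Stmt17.sum_eq (ne_of_gt hτim) hroot
  have hprod := Stmt17.prod_eq (ne_of_gt hτim) hroot
  have hκ : (2:ℝ) ≤ (k:ℝ) := by exact_mod_cast hk
  have core := Stmt17.core_summable (z := (z:ℂ)) ha hsum hprod hzim hτim hκ
  have habs_zpow : ∀ x : ℂ, ‖x ^ (-(k:ℤ))‖ = ‖x‖ ^ (-(k:ℝ)) := by
    intro x
    rw [norm_zpow, ← Real.rpow_intCast (‖x‖) (-(k:ℤ))]
    congr 1
    push_cast
    ring
  -- the orbit section
  let O := {q : ℤ×ℤ×ℤ // ∃ g : (Matrix.SpecialLinearGroup (Fin 2) ℤ), q = formAct (a,b,c) g}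
  let σ : O → (Matrix.SpecialLinearGroup (Fin 2) ℤ) := fun q => q.2.choose
  have hσ : ∀ q : O, q.1 = formAct (a,b,c) (σ q) := fun q => q.2.choose_spec
  have hσinj : Function.Injective σ := by
    intro q q' h
    apply Subtype.ext
    rw [hσ q, hσ q', h]
  have hOsum : Summable (fun q : O => ‖(valC q.1 (z:ℂ)) ^ (-(k:ℤ))‖) := by
    apply Summable.congr (core.comp_injective hσinj)
    intro q
    show Wf a b c (z:ℂ) (k:ℝ) (σ q) = _
    rw [habs_zpow, Wf, ← hσ q]
  -- the term identity
  have hterm : ∀ g : (Matrix.SpecialLinearGroup (Fin 2) ℤ),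
      denomSL g (z:ℂ) ^ (-(2 * (k : ℤ))) * (moebius g (z:ℂ) - (starRingEnd ℂ) (τ:ℂ)) ^ (-(2 * (k:ℤ)))
        * ((moebius g (z:ℂ) - (τ:ℂ)) / (moebius g (z:ℂ) - (starRingEnd ℂ) (τ:ℂ))) ^ (-(k:ℤ))
      = (a:ℂ)^k * (valC (formAct (a,b,c) g) (z:ℂ))^(-(k:ℤ)) :=
    fun g => Stmt17.term_eq ha hzim hτim hroot g (hz g)
  have hSL : Summable (fun g : (Matrix.SpecialLinearGroup (Fin 2) ℤ) =>
      ‖denomSL g (z:ℂ) ^ (-(2 * (k : ℤ)))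
        * (moebius g (z:ℂ) - (starRingEnd ℂ) (τ:ℂ)) ^ (-(2 * (k:ℤ)))
        * ((moebius g (z:ℂ) - (τ:ℂ)) / (moebius g (z:ℂ) - (starRingEnd ℂ) (τ:ℂ))) ^ (-(k:ℤ))‖) := by
    apply Summable.congr (core.mul_left ((a:ℝ)^k))
    intro g
    rw [hterm g, norm_mul, habs_zpow, norm_pow, Complex.norm_intCast,
      _root_.abs_of_pos (by exact_mod_cast ha : (0:ℝ) < (a:ℝ))]
    rfl
  refine ⟨hOsum, hSL, ?_⟩
  -- the equality
  haveI hFin : Finite {g : (Matrix.SpecialLinearGroup (Fin 2) ℤ) // moebius g (τ:ℂ) = (τ:ℂ)} :=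
    Stmt17.stab_finite hD ha hdisc hτim hroot
  haveI hNE : Nonempty {g : (Matrix.SpecialLinearGroup (Fin 2) ℤ) // moebius g (τ:ℂ) = (τ:ℂ)} :=
    ⟨⟨1, Stmt17.moebius_one (τ:ℂ)⟩⟩
  set N : ℕ := Nat.card {g : (Matrix.SpecialLinearGroup (Fin 2) ℤ) // moebius g (τ:ℂ) = (τ:ℂ)} with hNdef
  have hNpos : 0 < N := Nat.card_pos
  let π : (Matrix.SpecialLinearGroup (Fin 2) ℤ) → O := fun g => ⟨formAct (a,b,c) g, ⟨g, rfl⟩⟩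
  let v : O → ℂ := fun q => (valC q.1 (z:ℂ))^(-(k:ℤ))
  have hCsum : Summable (fun g : (Matrix.SpecialLinearGroup (Fin 2) ℤ) => v (π g)) := by
    apply Summable.of_norm
    apply Summable.congr core
    intro g
    show Wf a b c (z:ℂ) (k:ℝ) g = ‖(valC (formAct (a,b,c) g) (z:ℂ))^(-(k:ℤ))‖
    rw [habs_zpow, Wf]
  have fibEquiv : ∀ q : O, {g : (Matrix.SpecialLinearGroup (Fin 2) ℤ) // π g = q}
      ≃ {g : (Matrix.SpecialLinearGroup (Fin 2) ℤ) // moebius g (τ:ℂ) = (τ:ℂ)} := by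
    intro q
    have e₁ : {g : (Matrix.SpecialLinearGroup (Fin 2) ℤ) // π g = q}
        ≃ {g : (Matrix.SpecialLinearGroup (Fin 2) ℤ) // formAct (a,b,c) g = formAct (a,b,c) (σ q)} :=
      Equiv.subtypeEquivRight (fun g => by
        rw [← hσ q]
        constructor
        · intro h
          exact congrArg Subtype.val h
        · intro h
          exact Subtype.ext h)
    have e₂ := Stmt17.fiberEquiv a b c (σ q)
    have e₃ : {h : (Matrix.SpecialLinearGroup (Fin 2) ℤ) // formAct (a,b,c) h = (a,b,c)}
        ≃ {g : (Matrix.SpecialLinearGroup (Fin 2) ℤ) // moebius g (τ:ℂ) = (τ:ℂ)} :=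
      Equiv.subtypeEquivRight (fun g => Stmt17.stab_iff hD ha hdisc hτim hroot g)
    exact e₁.trans (e₂.trans e₃)
  have hA : ∑' g : (Matrix.SpecialLinearGroup (Fin 2) ℤ), v (π g) = (N:ℂ) * ∑' q : O, v q :=
    tsum_card_smul π v N (fun q => Finite.of_equiv _ (fibEquiv q).symm)
      (fun q => Nat.card_congr (fibEquiv q)) hCsum
  have hS2 : ∑' g : (Matrix.SpecialLinearGroup (Fin 2) ℤ),
      denomSL g (z:ℂ) ^ (-(2 * (k : ℤ))) * (moebius g (z:ℂ) - (starRingEnd ℂ) (τ:ℂ)) ^ (-(2 * (k:ℤ)))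
        * ((moebius g (z:ℂ) - (τ:ℂ)) / (moebius g (z:ℂ) - (starRingEnd ℂ) (τ:ℂ))) ^ (-(k:ℤ))
      = (a:ℂ)^k * ((N:ℂ) * ∑' q : O, v q) := by
    rw [tsum_congr hterm, tsum_mul_left, ← hA]
  have hNR : (0:ℝ) < (N:ℝ) := by exact_mod_cast hNpos
  have haR : (0:ℝ) < (a:ℝ) := by exact_mod_cast ha
  have hcoefR : ((2*vQ)^k/(2*ω)) * ((a:ℝ)^k * (N:ℝ)) = Real.sqrt D ^ k := by
    rw [hvQ, hω]
    have h1 : 2 * (Real.sqrt D / (2*(a:ℝ))) = Real.sqrt D / (a:ℝ) := by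
      field_simp
    have h2 : 2 * ((N:ℝ) / 2) = (N:ℝ) := by ring
    rw [h1, h2, div_pow, div_mul_eq_mul_div, div_mul_eq_mul_div, div_eq_iff (by positivity)]
    have h3 : ((a:ℝ))⁻¹^k * (a:ℝ)^k = 1 := by
      rw [← mul_pow, inv_mul_cancel₀ haR.ne', one_pow]
    linear_combination (Real.sqrt (D:ℝ) ^ k * (N:ℝ)) * h3
  have hfinal : (((2 * vQ) ^ k / (2 * ω) : ℝ) : ℂ) * ((a:ℂ)^k * (N:ℂ)) = ((Real.sqrt D ^ k : ℝ) : ℂ) := by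
    rw [← hcoefR]
    push_cast
    ring
  have hgoalO : (fun q : O => ((q.1.1 : ℂ) * ((z:ℂ)) ^ 2 + (q.1.2.1 : ℂ) * ((z:ℂ))
      + (q.1.2.2 : ℂ)) ^ (-(k : ℤ))) = v := rfl
  rw [hgoalO, hS2]
  calc ((Real.sqrt D ^ k : ℝ) : ℂ) * ∑' q : O, v q
      = (((2 * vQ) ^ k / (2 * ω) : ℝ) : ℂ) * ((a:ℂ)^k * (N:ℂ)) * ∑' q : O, v q := by
        rw [hfinal]
    _ = (((2 * vQ) ^ k / (2 * ω) : ℝ) : ℂ) * ((a:ℂ)^k * ((N:ℂ) * ∑' q : O, v q)) := by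
        ring
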